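/- Let G be a group acting by isometries on a tree T, φ ∈ Aut(G) acting compatibly on T (i.e. φ·(gx) = φ(g)(φ·x)), and suppose the isometry of T induced by φ is hyperbolic with axis A. If g ∈ Fix(φ) fixes some point x of T, then g fixes the entire axis A pointwise (in particular g fixes every edge of A). -/
import Mathlib

section Aux

variable {V : Type*} {T : SimpleGraph V}

/-- `getVert` of a mapped walk. -/
lemma aux_getVert_map (F : T →g T) {u v : V} (p : T.Walk u v) (i : ℕ) :
    (p.map F).getVert i = F (p.getVert i) := by
  induction p generalizing i with
  | nil => cases i <;> rfl
  | cons h q ih =>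
      cases i with
      | zero => simp
      | succ n =>
          simp only [SimpleGraph.Walk.map_cons, SimpleGraph.Walk.getVert_cons_succ]
          exact ih n

/-- `getVert` is injective (on indices up to the length) for paths. -/
lemma aux_getVert_injOn {u v : V} {p : T.Walk u v} (hp : p.IsPath) :
    ∀ {i j : ℕ}, i ≤ p.length → j ≤ p.length → p.getVert i = p.getVert j → i = j := by
  induction p with
  | nil =>
      intro i j hi hj _
      simp only [SimpleGraph.Walk.length_nil, Nat.le_zero] at hi hj
      omega
  | @cons ua ub uc h q ih =>
      intro i j hi hj heq
      have hq : q.IsPath := hp.of_cons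
      have hu : ua ∉ q.support := ((SimpleGraph.Walk.cons_isPath_iff h q).mp hp).2
      match i, j with
      | 0, 0 => rfl
      | 0, (j' + 1) =>
          exfalso
          apply hu
          rw [SimpleGraph.Walk.mem_support_iff_exists_getVert]
          refine ⟨j', ?_, ?_⟩
          · simpa [SimpleGraph.Walk.getVert_cons_succ] using heq.symm
          · simpa using hj
      | (i' + 1), 0 =>
          exfalso
          apply hu
          rw [SimpleGraph.Walk.mem_support_iff_exists_getVert]
          refine ⟨i', ?_, ?_⟩
          · simpa [SimpleGraph.Walk.getVert_cons_succ] using heq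
          · simpa using hi
      | (i' + 1), (j' + 1) =>
          have := ih hq (by simpa using hi) (by simpa using hj)
            (by simpa [SimpleGraph.Walk.getVert_cons_succ] using heq)
          omega

/-- In an acyclic connected graph, every path realizes the distance. -/
lemma aux_path_length (hconn : T.Connected) (hacyc : T.IsAcyclic) {u v : V}
    (p : T.Walk u v) (hp : p.IsPath) : p.length = T.dist u v := by
  haveI := Classical.decEq V
  obtain ⟨w, hw⟩ := hconn.exists_walk_length_eq_dist u v
  have hbp : w.bypass.IsPath := w.bypass_isPath
  have heq := hacyc.path_unique ⟨p, hp⟩ ⟨w.bypass, hbp⟩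
  have heqw : p = w.bypass := congrArg Subtype.val heq
  refine le_antisymm ?_ (SimpleGraph.dist_le p)
  calc p.length = w.bypass.length := by rw [heqw]
    _ ≤ w.length := w.length_bypass_le
    _ = T.dist u v := hw

/-- Existence of a path between any two vertices. -/
lemma aux_exists_path (hconn : T.Connected) (u v : V) :
    ∃ p : T.Walk u v, p.IsPath := by
  haveI := Classical.decEq V
  obtain ⟨w, -⟩ := hconn.exists_walk_length_eq_dist u v
  exact ⟨w.bypass, w.bypass_isPath⟩

/-- In an acyclic graph, a reduced walk (no backtracking) is a path. -/
lemma aux_reduced_isPath (hacyc : T.IsAcyclic) {u v : V} (p : T.Walk u v)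
    (hred : ∀ i, i + 2 ≤ p.length → p.getVert i ≠ p.getVert (i + 2)) :
    p.IsPath := by
  induction p with
  | nil => simp
  | @cons ua ub uc h q ih =>
      have hq : q.IsPath := by
        apply ih
        intro i hi
        have := hred (i + 1) (by rw [SimpleGraph.Walk.length_cons]; omega)
        simpa [SimpleGraph.Walk.getVert_cons_succ] using this
      rw [SimpleGraph.Walk.cons_isPath_iff]
      refine ⟨hq, ?_⟩
      intro hu
      haveI := Classical.decEq V
      have hne : ua ≠ ub := h.ne
      have htU : (q.takeUntil ua hu).IsPath := hq.takeUntil hu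
      have hpe : (SimpleGraph.Walk.cons h SimpleGraph.Walk.nil).IsPath := by
        simp [SimpleGraph.Walk.cons_isPath_iff, hne]
      have heq := hacyc.path_unique ⟨(q.takeUntil ua hu).reverse, htU.reverse⟩
        ⟨SimpleGraph.Walk.cons h SimpleGraph.Walk.nil, hpe⟩
      have heqw : (q.takeUntil ua hu).reverse = SimpleGraph.Walk.cons h SimpleGraph.Walk.nil :=
        congrArg Subtype.val heq
      have hlen1 : (q.takeUntil ua hu).length = 1 := by
        have := congrArg SimpleGraph.Walk.length heqw
        simpa [SimpleGraph.Walk.length_reverse] using this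
      have hq1 : q.getVert 1 = ua := by
        conv_lhs => rw [← q.take_spec hu]
        rw [SimpleGraph.Walk.getVert_append, hlen1]
        simp
      have hql : 1 ≤ q.length := by
        by_contra hql
        have h0 : q.length = 0 := by omega
        rw [SimpleGraph.Walk.mem_support_iff_exists_getVert] at hu
        obtain ⟨n, hn, hnle⟩ := hu
        have hn0 : n = 0 := by omega
        subst hn0
        rw [SimpleGraph.Walk.getVert_zero] at hn
        exact hne hn.symm
      refine hred 0 (by rw [SimpleGraph.Walk.length_cons]; omega) ?_
      show (SimpleGraph.Walk.cons h q).getVert 0 = (SimpleGraph.Walk.cons h q).getVert 2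
      rw [SimpleGraph.Walk.getVert_zero]
      show ua = q.getVert 1
      rw [hq1]

/-- Gluing two paths with no backtrack at the junction gives a path (in a tree). -/
lemma aux_glue (hacyc : T.IsAcyclic) {u v w : V} {p : T.Walk u v} {q : T.Walk v w}
    (hp : p.IsPath) (hq : q.IsPath) (hp1 : 1 ≤ p.length) (hq1 : 1 ≤ q.length)
    (hj : p.getVert (p.length - 1) ≠ q.getVert 1) : (p.append q).IsPath := by
  apply aux_reduced_isPath hacyc
  intro i hi heq
  rw [SimpleGraph.Walk.length_append] at hi
  rw [SimpleGraph.Walk.getVert_append, SimpleGraph.Walk.getVert_append] at heq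
  by_cases h1 : i + 2 ≤ p.length
  · have hlt1 : i < p.length := by omega
    rw [if_pos hlt1] at heq
    by_cases h2 : i + 2 < p.length
    · rw [if_pos h2] at heq
      have := aux_getVert_injOn hp (by omega) (by omega) heq
      omega
    · have h3 : i + 2 = p.length := by omega
      rw [if_neg (by omega)] at heq
      rw [h3, Nat.sub_self, SimpleGraph.Walk.getVert_zero] at heq
      have hpv : p.getVert (i + 2) = v := by
        rw [h3]; exact p.getVert_length
      have := aux_getVert_injOn hp (le_of_lt hlt1) (le_of_eq h3) (heq.trans hpv.symm)
      omega
  · by_cases h4 : i < p.length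
    · have h5 : i = p.length - 1 := by omega
      rw [if_pos h4, if_neg (by omega)] at heq
      have h6 : i + 2 - p.length = 1 := by omega
      rw [h6] at heq
      exact hj (h5 ▸ heq)
    · rw [if_neg h4, if_neg (by omega)] at heq
      have h7 : i + 2 - p.length = (i - p.length) + 2 := by omega
      rw [h7] at heq
      have := aux_getVert_injOn hq (by omega) (by omega) heq
      omega

/-- If an injective graph homomorphism fixes the endpoints of a path in a tree,
it fixes every vertex of the path. -/
lemma aux_fix_support (hacyc : T.IsAcyclic) (F : T →g T) (hF : Function.Injective F)
    {u v : V} (p : T.Walk u v) (hp : p.IsPath) (hu : F u = u) (hv : F v = v) :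
    ∀ z ∈ p.support, F z = z := by
  intro z hz
  have hmp : ((p.map F).copy hu hv).IsPath := by
    rw [SimpleGraph.Walk.isPath_copy]
    exact p.map_isPath_of_injective hF hp
  have heq := hacyc.path_unique ⟨p, hp⟩ ⟨(p.map F).copy hu hv, hmp⟩
  have heqw : p = (p.map F).copy hu hv := congrArg Subtype.val heq
  rw [SimpleGraph.Walk.mem_support_iff_exists_getVert] at hz
  obtain ⟨n, hn, -⟩ := hz
  calc F z = F (p.getVert n) := by rw [hn]
    _ = (p.map F).getVert n := (aux_getVert_map F p n).symm
    _ = ((p.map F).copy hu hv).getVert n := (SimpleGraph.Walk.getVert_copy _ n hu hv).symm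
    _ = p.getVert n := by rw [← heqw]
    _ = z := hn

end Aux

/-- If `φ` acts compatibly on a tree as a hyperbolic isometry `f` (no fixed vertex),
and `g ∈ Fix(φ)` fixes some vertex, then `g` fixes the whole axis (minset) of `f`. -/
theorem stmt11 (G V : Type*) [Group G] (T : SimpleGraph V)
    (hconn : T.Connected) (hacyc : T.IsAcyclic)
    [MulAction G V] (hadj : ∀ (g : G) (u v : V), T.Adj u v → T.Adj (g • u) (g • v))
    (φ : G ≃* G) (f : V ≃ V) (hf : ∀ u v : V, T.Adj u v → T.Adj (f u) (f v))
    (hcompat : ∀ (g : G) (y : V), f (g • y) = φ g • f y)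
    (hhyp : ∀ v : V, f v ≠ v)
    (g : G) (hg : φ g = g) (x : V) (hx : g • x = x) :
    ∀ a : V, T.dist a (f a) = sInf (Set.range fun v : V => T.dist v (f v)) →
      g • a = a := by
  intro a ha
  set m : ℕ := sInf (Set.range fun v : V => T.dist v (f v)) with hm
  have hfg : ∀ v : V, f (g • v) = g • f v := by
    intro v; rw [hcompat g v, hg]
  have hSf : ∀ v : V, g • v = v → g • f v = f v := by
    intro v hv; rw [← hfg, hv]
  have hSfinv : ∀ v : V, g • v = v → g • f.symm v = f.symm v := by
    intro v hv
    apply f.injective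
    rw [hfg, Equiv.apply_symm_apply, hv]
  have hm_le : ∀ v : V, m ≤ T.dist v (f v) := fun v => Nat.sInf_le ⟨v, rfl⟩
  have hm_pos : 1 ≤ m := by
    have h0 : 0 < T.dist a (f a) := hconn.pos_dist_of_ne (fun e => hhyp a e.symm)
    rw [ha] at h0
    omega
  have hne : ((fun s : V => T.dist s a) '' {s : V | g • s = s}).Nonempty :=
    ⟨T.dist x a, ⟨x, hx, rfl⟩⟩
  obtain ⟨c, hcS, hc⟩ := Nat.sInf_mem hne
  set h : ℕ := sInf ((fun s : V => T.dist s a) '' {s : V | g • s = s}) with hh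
  have hc' : T.dist c a = h := hc
  have hcS' : g • c = c := hcS
  have hmin : ∀ s : V, g • s = s → h ≤ T.dist s a := fun s hs => Nat.sInf_le ⟨s, hs, rfl⟩
  by_cases hh0 : h = 0
  · have hca : c = a := hconn.dist_eq_zero_iff.mp (by rw [hc', hh0])
    rw [← hca]
    exact hcS'
  · exfalso
    have hh1 : 1 ≤ h := by omega
    set F : T →g T := ⟨fun v => f v, fun {y z} hyz => hf y z hyz⟩ with hF
    set Fg : T →g T := ⟨fun v => g • v, fun {y z} hyz => hadj g y z hyz⟩ with hFg
    have hFinj : Function.Injective (F : V → V) := fun y z hyz => f.injective hyz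
    have hFginj : Function.Injective (Fg : V → V) := MulAction.injective g
    obtain ⟨R, hR⟩ := aux_exists_path hconn c a
    have hRlen : R.length = h := by
      rw [aux_path_length hconn hacyc R hR, hc']
    obtain ⟨Pc, hPc⟩ := aux_exists_path hconn c (f c)
    have hPclen : Pc.length = T.dist c (f c) := aux_path_length hconn hacyc Pc hPc
    have hD1 : 1 ≤ Pc.length := by
      rw [hPclen]
      calc 1 ≤ m := hm_pos
        _ ≤ T.dist c (f c) := hm_le c
    have hPcS : ∀ z ∈ Pc.support, g • z = z := by
      intro z hz
      exact aux_fix_support hacyc Fg hFginj Pc hPc hcS' (hSf c hcS') z hz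
    set c₁ : V := R.getVert 1 with hc₁
    have hc1a : T.dist c₁ a ≤ h - 1 := by
      have hnotnil : ¬ R.Nil := by
        rw [SimpleGraph.Walk.not_nil_iff_lt_length]; omega
      have hlt : R.tail.length + 1 = R.length :=
        SimpleGraph.Walk.length_tail_add_one hnotnil
      have hd : T.dist c₁ a ≤ R.tail.length := SimpleGraph.dist_le R.tail
      omega
    have hnotc1 : ¬ (g • c₁ = c₁) := by
      intro hfix
      have := hmin c₁ hfix
      omega
    have hfc : F c = f c := rfl
    have hfa : F a = f a := rfl
    set Rf : T.Walk (f c) (f a) := (R.map F).copy hfc hfa with hRf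
    have hRfpath : Rf.IsPath := by
      rw [hRf, SimpleGraph.Walk.isPath_copy]
      exact R.map_isPath_of_injective hFinj hR
    have hRflen : Rf.length = h := by
      rw [hRf, SimpleGraph.Walk.length_copy, SimpleGraph.Walk.length_map, hRlen]
    have hRf1 : Rf.getVert 1 = f c₁ := by
      rw [hRf, SimpleGraph.Walk.getVert_copy, aux_getVert_map, hc₁]
      rfl
    have hjunc2 : Pc.getVert (Pc.length - 1) ≠ Rf.getVert 1 := by
      intro hE
      rw [hRf1] at hE
      have hmem : f c₁ ∈ Pc.support := by
        rw [SimpleGraph.Walk.mem_support_iff_exists_getVert]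
        exact ⟨Pc.length - 1, hE, by omega⟩
      have hfix : g • f c₁ = f c₁ := hPcS _ hmem
      apply hnotc1
      have := hSfinv _ hfix
      rwa [Equiv.symm_apply_apply] at this
    set Q : T.Walk c (f a) := Pc.append Rf with hQ
    have hQpath : Q.IsPath :=
      aux_glue hacyc hPc hRfpath hD1 (by omega) hjunc2
    have hQlen : Q.length = Pc.length + h := by
      rw [hQ, SimpleGraph.Walk.length_append, hRflen]
    have hjunc1 : R.reverse.getVert (R.reverse.length - 1) ≠ Q.getVert 1 := by
      rw [SimpleGraph.Walk.getVert_reverse, SimpleGraph.Walk.length_reverse, hRlen]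
      have he1 : h - (h - 1) = 1 := by omega
      rw [he1, ← hc₁]
      intro hE
      have hmem : Q.getVert 1 ∈ Pc.support := by
        rw [hQ, SimpleGraph.Walk.getVert_append]
        by_cases h1 : 1 < Pc.length
        · rw [if_pos h1]
          rw [SimpleGraph.Walk.mem_support_iff_exists_getVert]
          exact ⟨1, rfl, by omega⟩
        · rw [if_neg h1]
          have hPl : Pc.length = 1 := by omega
          rw [hPl, Nat.sub_self, SimpleGraph.Walk.getVert_zero]
          exact Pc.end_mem_support
      rw [← hE] at hmem
      exact hnotc1 (hPcS _ hmem)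
    set W : T.Walk a (f a) := R.reverse.append Q with hW
    have hWpath : W.IsPath :=
      aux_glue hacyc hR.reverse hQpath
        (by rw [SimpleGraph.Walk.length_reverse]; omega)
        (by rw [hQlen]; omega) hjunc1
    have hWlen : W.length = h + (Pc.length + h) := by
      rw [hW, SimpleGraph.Walk.length_append, SimpleGraph.Walk.length_reverse, hRlen, hQlen]
    have hWdist : W.length = T.dist a (f a) := aux_path_length hconn hacyc W hWpath
    have hmc : m ≤ Pc.length := by rw [hPclen]; exact hm_le c
    have hfinal : h + (Pc.length + h) = m := by rw [← hWlen, hWdist, ha]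
    omega
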